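/- If γ : F₀(Y) → F₀(X) is a K-algebra isomorphism, then there exists a unique bijection h : X → Y such that γ(f) = f ∘ h for all f ∈ F₀(Y). -/

import Mathlib

open Finsupp

lemma key_aux {K X Y : Type*} [Field K] (γ : (Y →₀ K) →ₙₐ[K] (X →₀ K))
    (hs : Function.Surjective γ) :
    ∃ h : X → Y, ∀ (f : Y →₀ K) (x : X), γ f x = f (h x) := by
  have hsingle : ∀ (y : Y) (c : K) (x : X),
      γ (Finsupp.single y c) x = c * γ (Finsupp.single y 1) x := by
    intro y c x
    have : Finsupp.single y c = c • Finsupp.single y 1 := by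
      rw [Finsupp.smul_single, smul_eq_mul, mul_one]
    rw [this, map_smul, Finsupp.smul_apply, smul_eq_mul]
  have hex : ∀ x : X, ∃ y : Y, γ (Finsupp.single y 1) x ≠ 0 := by
    intro x
    by_contra hc
    push_neg at hc
    obtain ⟨f, hf⟩ := hs (Finsupp.single x 1)
    have h0 : γ f x = 0 := by
      conv_lhs => rw [← Finsupp.sum_single f]
      rw [map_finsuppSum, Finsupp.sum, Finsupp.finset_sum_apply]
      apply Finset.sum_eq_zero
      intro y _
      rw [hsingle, hc, mul_zero]
    rw [hf] at h0
    simp at h0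
  -- uniqueness of such y
  have huniq : ∀ (x : X) (y y' : Y), γ (Finsupp.single y 1) x ≠ 0 →
      γ (Finsupp.single y' 1) x ≠ 0 → y = y' := by
    intro x y y' hy hy'
    by_contra hne
    have hmul : Finsupp.single y (1:K) * Finsupp.single y' 1 = 0 := by
      ext z
      rw [Finsupp.mul_apply]
      rcases eq_or_ne z y with rfl | hz
      · rw [Finsupp.single_eq_of_ne' (Ne.symm hne), mul_zero]; rfl
      · rw [Finsupp.single_eq_of_ne' (fun h => hz h.symm), zero_mul]; rfl
    have := congrArg (fun g => g x) (map_mul γ (Finsupp.single y 1) (Finsupp.single y' 1))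
    simp only [hmul, map_zero, Finsupp.coe_zero, Pi.zero_apply, Finsupp.mul_apply] at this
    exact hy (by
      rcases mul_eq_zero.mp this.symm with h | h
      · exact h
      · exact absurd h hy')
  choose h hh using hex
  -- value is 1
  have hone : ∀ x : X, γ (Finsupp.single (h x) 1) x = 1 := by
    intro x
    have hid : Finsupp.single (h x) (1:K) * Finsupp.single (h x) 1 = Finsupp.single (h x) 1 := by
      rw [← Finsupp.single_mul, mul_one]
    have := congrArg (fun g => g x) (map_mul γ (Finsupp.single (h x) 1) (Finsupp.single (h x) 1))
    simp only [hid, Finsupp.mul_apply] at this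
    exact mul_right_cancel₀ (hh x) (by rw [one_mul]; exact this.symm)
  refine ⟨h, fun f x => ?_⟩
  have hfs : f * Finsupp.single (h x) 1 = Finsupp.single (h x) (f (h x)) := by
    ext z
    rw [Finsupp.mul_apply]
    rcases eq_or_ne z (h x) with rfl | hz
    · rw [Finsupp.single_eq_same, Finsupp.single_eq_same, mul_one]
    · rw [Finsupp.single_eq_of_ne' (Ne.symm hz), Finsupp.single_eq_of_ne' (Ne.symm hz), mul_zero]
  have := congrArg (fun g => g x) (map_mul γ f (Finsupp.single (h x) 1))
  simp only [hfs, Finsupp.mul_apply, hone x, mul_one, hsingle] at this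
  exact this.symm

theorem statement3 (K X Y : Type*) [Field K] (γ : (Y →₀ K) →ₙₐ[K] (X →₀ K))
    (hγ : Function.Bijective γ) :
    ∃! h : X → Y, Function.Bijective h ∧ ∀ (f : Y →₀ K) (x : X), γ f x = f (h x) := by
  classical
  obtain ⟨h, hh⟩ := key_aux γ hγ.2
  set e := Equiv.ofBijective γ hγ with he
  have hesymm : ∀ g : X →₀ K, γ (e.symm g) = g := fun g => e.apply_symm_apply g
  have hsymme : ∀ f : Y →₀ K, e.symm (γ f) = f := fun f => e.symm_apply_apply f
  let δ : (X →₀ K) →ₙₐ[K] (Y →₀ K) :=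
  { toFun := fun g => e.symm g
    map_add' := fun a b => hγ.1 (by rw [hesymm, map_add, hesymm, hesymm])
    map_smul' := fun c a => hγ.1 (by rw [hesymm, map_smul, hesymm]; rfl)
    map_mul' := fun a b => hγ.1 (by rw [hesymm, map_mul, hesymm, hesymm])
    map_zero' := hγ.1 (by rw [hesymm, map_zero]) }
  obtain ⟨h', hh'⟩ := key_aux δ (fun f => ⟨γ f, hsymme f⟩)
  have hinv1 : ∀ y : Y, h (h' y) = y := by
    intro y
    have h2 : δ (γ (Finsupp.single y 1)) y = (γ (Finsupp.single y 1)) (h' y) := hh' _ y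
    have hδ : δ (γ (Finsupp.single y 1)) = Finsupp.single y 1 := hsymme _
    rw [hδ, Finsupp.single_eq_same, hh] at h2
    by_contra hne
    rw [Finsupp.single_eq_of_ne' (fun hc => hne hc.symm)] at h2
    exact one_ne_zero h2
  have hinv2 : ∀ x : X, h' (h x) = x := by
    intro x
    have h1 : γ (e.symm (Finsupp.single x 1)) x = (e.symm (Finsupp.single x 1)) (h x) := hh _ x
    rw [hesymm, Finsupp.single_eq_same] at h1
    have h2 : δ (Finsupp.single x 1) (h x) = (Finsupp.single x 1) (h' (h x)) := hh' _ (h x)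
    have h3 : (e.symm (Finsupp.single x 1)) (h x) = δ (Finsupp.single x 1) (h x) := rfl
    rw [h3, h2] at h1
    by_contra hne
    rw [Finsupp.single_eq_of_ne' (fun hc => hne hc.symm)] at h1
    exact one_ne_zero h1
  refine ⟨h, ⟨⟨fun a b hab => ?_, fun y => ⟨h' y, hinv1 y⟩⟩, hh⟩, ?_⟩
  · have := congrArg h' hab; rwa [hinv2, hinv2] at this
  · intro g ⟨hgb, hg⟩
    funext x
    have h1 := hg (Finsupp.single (h x) 1) x
    rw [hh, Finsupp.single_eq_same] at h1
    by_contra hne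
    rw [Finsupp.single_eq_of_ne' (fun hc => hne hc.symm)] at h1
    exact one_ne_zero h1
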